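/- Let (ℒ, 𝒜) be a complete duality pair over a commutative ring R. Then every Gorenstein (ℒ,𝒜)-projective R-module is Gorenstein (ℒ,𝒜)-flat. -/

import Mathlib

open CategoryTheory

universe w u

/-- The character module `M⁺ = Hom_ℤ(M, ℚ/ℤ)` of `M`, as an object of `ModuleCat R`
(with the `R`-action `(r • f) x = f (r • x)`). -/
noncomputable def charMod (R : Type u) [CommRing R] (M : ModuleCat.{u} R) : ModuleCat.{u} R :=
  ModuleCat.of R (CharacterModule M)

/-- `(𝓜, 𝓒)` is a duality pair over `R`: both classes are closed under isomorphism,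
`M ∈ 𝓜 ↔ M⁺ ∈ 𝓒`, and `𝓒` is closed under direct summands and finite direct sums. -/
structure IsDualityPair (R : Type u) [CommRing R]
    (Mc Cc : ModuleCat.{u} R → Prop) : Prop where
  isoClosed_fst : ∀ {A B : ModuleCat.{u} R}, (A ≅ B) → Mc A → Mc B
  isoClosed_snd : ∀ {A B : ModuleCat.{u} R}, (A ≅ B) → Cc A → Cc B
  char_mem_iff : ∀ M : ModuleCat.{u} R, Mc M ↔ Cc (charMod R M)
  summand_closed : ∀ A B : ModuleCat.{u} R, Cc (ModuleCat.of R (A × B)) → Cc A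
  finSum_closed : ∀ A B : ModuleCat.{u} R, Cc A → Cc B → Cc (ModuleCat.of R (A × B))

/-- A duality pair `(𝓜, 𝓒)` is perfect if `R ∈ 𝓜` and `𝓜` is closed under arbitrary
direct sums and under extensions. -/
structure IsPerfectDualityPair (R : Type u) [CommRing R]
    (Mc Cc : ModuleCat.{u} R → Prop) extends IsDualityPair R Mc Cc : Prop where
  self_mem : Mc (ModuleCat.of R R)
  directSum_closed : ∀ (ι : Type u) (A : ι → ModuleCat.{u} R),
    (∀ i, Mc (A i)) → Mc (ModuleCat.of R (DirectSum ι (fun i => A i)))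
  extension_closed : ∀ S : ShortComplex (ModuleCat.{u} R),
    S.ShortExact → Mc S.X₁ → Mc S.X₃ → Mc S.X₂

/-- `(ℒ, 𝒜)` is a complete duality pair: `{ℒ, 𝒜}` is a symmetric duality pair
with `(ℒ, 𝒜)` perfect. -/
structure IsCompleteDualityPair (R : Type u) [CommRing R]
    (Lc Ac : ModuleCat.{u} R → Prop) : Prop where
  perfect : IsPerfectDualityPair R Lc Ac
  snd : IsDualityPair R Ac Lc

/-- The chain complex of abelian groups `Hom_R(M, X)` induced by a chain complex `X`. -/
noncomputable def homFromComplex (R : Type u) [CommRing R] (M : ModuleCat.{u} R)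
    (X : ChainComplex (ModuleCat.{u} R) ℤ) : ChainComplex AddCommGrpCat.{u} ℤ :=
  ((preadditiveCoyoneda.obj (Opposite.op M)).mapHomologicalComplex _).obj X

/-- The complex of abelian groups `Hom_R(X, M)` induced by a chain complex `X`. -/
noncomputable def homToComplex (R : Type u) [CommRing R]
    (X : ChainComplex (ModuleCat.{u} R) ℤ) (M : ModuleCat.{u} R) :
    HomologicalComplex AddCommGrpCat.{u} (ComplexShape.down ℤ).symm :=
  ((preadditiveYoneda.obj M).mapHomologicalComplex _).obj X.op

/-- The chain complex `M ⊗_R X` induced by a chain complex `X`. -/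
noncomputable def tensorComplex (R : Type u) [CommRing R] (M : ModuleCat.{u} R)
    (X : ChainComplex (ModuleCat.{u} R) ℤ) : ChainComplex (ModuleCat.{u} R) ℤ :=
  ((MonoidalCategory.tensorLeft M).mapHomologicalComplex _).obj X

/-- A complex is exact if its homology vanishes in every degree. -/
def ComplexExact {V : Type*} [Category V] [Limits.HasZeroMorphisms V] {ι : Type*}
    {c : ComplexShape ι} (X : HomologicalComplex V c) : Prop :=
  ∀ n, X.ExactAt n

/-- `M` is Gorenstein `(ℒ,𝒜)`-projective: `M ≅ Z₀P` for some exact complex `P` of projectives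
such that `Hom_R(P, L)` is exact for all `L ∈ ℒ`. -/
def IsGorensteinProjective (R : Type u) [CommRing R]
    (Lc : ModuleCat.{u} R → Prop) (M : ModuleCat.{u} R) : Prop :=
  ∃ P : ChainComplex (ModuleCat.{u} R) ℤ,
    (∀ n, Projective (P.X n)) ∧ ComplexExact P ∧
      (∀ L, Lc L → ComplexExact (homToComplex R P L)) ∧
      Nonempty (M ≅ P.cycles 0)

/-- `M` is Gorenstein `(ℒ,𝒜)`-flat: `M ≅ Z₀F` for some exact complex `F` of flat modules
such that `A ⊗_R F` is exact for all `A ∈ 𝒜`. -/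
def IsGorensteinFlat (R : Type u) [CommRing R]
    (Ac : ModuleCat.{u} R → Prop) (M : ModuleCat.{u} R) : Prop :=
  ∃ F : ChainComplex (ModuleCat.{u} R) ℤ,
    (∀ n, Module.Flat R (F.X n)) ∧ ComplexExact F ∧
      (∀ A, Ac A → ComplexExact (tensorComplex R A F)) ∧
      Nonempty (M ≅ F.cycles 0)


open scoped TensorProduct

/-- Character modules detect exactness: if every character of `B` vanishing on the image of
`f` factors through `g`, and `g ∘ f = 0`, then the sequence is exact at `B`. -/
lemma aux_exact_of_character {R A B C : Type u} [CommRing R]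
    [AddCommGroup A] [AddCommGroup B] [AddCommGroup C]
    [Module R A] [Module R B] [Module R C] (f : A →ₗ[R] B) (g : B →ₗ[R] C)
    (hd : ∀ c : CharacterModule B, (∀ a, c (f a) = 0) →
      ∃ d : CharacterModule C, ∀ b, d (g b) = c b) :
    ∀ b : B, g b = 0 → ∃ a, f a = b := by
  intro b hb
  by_contra hcon
  push_neg at hcon
  have hπb : (LinearMap.range f).mkQ b ≠ 0 := by
    intro h0
    rw [Submodule.mkQ_apply, Submodule.Quotient.mk_eq_zero] at h0
    obtain ⟨a, ha⟩ := h0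
    exact hcon a ha
  obtain ⟨cb, hcb⟩ := CharacterModule.exists_character_apply_ne_zero_of_ne_zero hπb
  have hvan : ∀ a, (cb.comp (LinearMap.range f).mkQ.toAddMonoidHom) (f a) = 0 := by
    intro a
    have : (LinearMap.range f).mkQ (f a) = 0 := by
      rw [Submodule.mkQ_apply, Submodule.Quotient.mk_eq_zero]
      exact ⟨a, rfl⟩
    show cb ((LinearMap.range f).mkQ (f a)) = 0
    rw [this, map_zero]
  obtain ⟨d, hdc⟩ := hd _ hvan
  have := hdc b
  rw [hb, map_zero] at this
  exact hcb this.symm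

/-- If the `Hom(-, A⁺)`-dual sequence is exact, then the `A ⊗ -` sequence is exact. -/
lemma aux_tensor_exact_of_hom_exact {R A X₁ X₂ X₃ : Type u} [CommRing R]
    [AddCommGroup A] [AddCommGroup X₁] [AddCommGroup X₂] [AddCommGroup X₃]
    [Module R A] [Module R X₁] [Module R X₂] [Module R X₃]
    (f : X₁ →ₗ[R] X₂) (g : X₂ →ₗ[R] X₃)
    (hh : ∀ φ : X₂ →ₗ[R] CharacterModule A, (∀ x, φ (f x) = 0) →
      ∃ ψ : X₃ →ₗ[R] CharacterModule A, ∀ x, ψ (g x) = φ x) :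
    ∀ t : A ⊗[R] X₂, g.lTensor A t = 0 → ∃ s : A ⊗[R] X₁, f.lTensor A s = t := by
  apply aux_exact_of_character (f.lTensor A) (g.lTensor A)
  intro c hc
  -- build `φ : X₂ →ₗ A⁺`, `φ x a = c (a ⊗ x)`
  let φ : X₂ →ₗ[R] CharacterModule A :=
  { toFun := fun x => c.comp (((TensorProduct.mk R A X₂).flip x).toAddMonoidHom)
    map_add' := by
      intro x y
      ext a
      show c (a ⊗ₜ[R] (x + y)) = c (a ⊗ₜ[R] x) + c (a ⊗ₜ[R] y)
      rw [TensorProduct.tmul_add, map_add]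
    map_smul' := by
      intro r x
      ext a
      show c (a ⊗ₜ[R] (r • x)) = c ((r • a) ⊗ₜ[R] x)
      rw [TensorProduct.smul_tmul] }
  have hφf : ∀ x, φ (f x) = 0 := by
    intro x
    ext a
    have := hc (a ⊗ₜ[R] x)
    rw [LinearMap.lTensor_tmul] at this
    exact this
  obtain ⟨ψ, hψ⟩ := hh φ hφf
  refine ⟨(CharacterModule.uncurry ψ).comp
    (TensorProduct.comm R A X₃).toLinearMap.toAddMonoidHom, ?_⟩
  intro t
  induction t using TensorProduct.induction_on with
  | zero =>
      show CharacterModule.uncurry ψ ((TensorProduct.comm R A X₃) (g.lTensor A 0)) = c 0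
      rw [map_zero, map_zero, map_zero, map_zero]
  | tmul a x =>
      have h1 : g.lTensor A (a ⊗ₜ[R] x) = a ⊗ₜ[R] g x := LinearMap.lTensor_tmul _ _ _ _
      rw [h1]
      show CharacterModule.uncurry ψ ((TensorProduct.comm R A X₃) (a ⊗ₜ[R] g x)) = c (a ⊗ₜ[R] x)
      rw [TensorProduct.comm_tmul]
      show ψ (g x) a = c (a ⊗ₜ[R] x)
      rw [hψ x]
      rfl
  | add t t' ht ht' =>
      show CharacterModule.uncurry ψ ((TensorProduct.comm R A X₃) (g.lTensor A (t + t'))) =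
        c (t + t')
      rw [map_add, map_add, map_add, map_add]
      exact congrArg₂ (· + ·) ht ht'

/-- For a complete duality pair `(ℒ, 𝒜)`, every Gorenstein `(ℒ,𝒜)`-projective module is
Gorenstein `(ℒ,𝒜)`-flat. -/
theorem gorensteinFlat_of_gorensteinProjective
    (R : Type u) [CommRing R] (Lc Ac : ModuleCat.{u} R → Prop)
    (h : IsCompleteDualityPair R Lc Ac)
    (M : ModuleCat.{u} R) (hM : IsGorensteinProjective R Lc M) :
    IsGorensteinFlat R Ac M := by
  obtain ⟨P, hproj, hex, hhom, ⟨iso⟩⟩ := hM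
  refine ⟨P, ?_, hex, ?_, ⟨iso⟩⟩
  · intro n
    have hp : Projective (ModuleCat.of R (P.X n)) := hproj n
    have : Module.Projective R (P.X n) := (IsProjective.iff_projective (R := R) (P.X n)).mpr hp
    exact Module.Flat.of_projective
  · intro A hA n
    have hL : Lc (charMod R A) := (h.snd.char_mem_iff A).mp hA
    have hE := hhom (charMod R A) hL n
    rw [HomologicalComplex.exactAt_iff' _ (n - 1) n (n + 1)
      ((ComplexShape.down ℤ).symm.prev_eq' (by simp [ComplexShape.symm]))
      ((ComplexShape.down ℤ).symm.next_eq' (by simp [ComplexShape.symm]))] at hE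
    rw [ShortComplex.ab_exact_iff] at hE
    rw [HomologicalComplex.exactAt_iff' _ (n + 1) n (n - 1)
      ((ComplexShape.down ℤ).prev_eq' (by simp))
      ((ComplexShape.down ℤ).next_eq' (by simp))]
    rw [ShortComplex.moduleCat_exact_iff]
    intro x hx
    refine aux_tensor_exact_of_hom_exact (P.d (n + 1) n).hom (P.d n (n - 1)).hom ?_ x hx
    intro φ hφ
    obtain ⟨ψ, hψ⟩ := hE (ModuleCat.ofHom φ) (by
      show P.d (n + 1) n ≫ ModuleCat.ofHom φ = 0
      exact ModuleCat.hom_ext (LinearMap.ext hφ))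
    refine ⟨ψ.hom, fun x => ?_⟩
    have hψ' : P.d n (n - 1) ≫ ψ = ModuleCat.ofHom φ :=
      hψ
    exact congrArg (fun (θ : P.X n ⟶ charMod R A) => θ.hom x) hψ'
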